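/- arXiv:1102.5541 — 4 statements merged into one kernel-verified Lean document; each statement's English description precedes it below -/
import Mathlib

section
/- Let t > 0, r > 0 and let f : ℝ → ℝ be Borel measurable with 0 ≤ f(s) ≤ r for all s ∈ [0,t]. Let p denote the two-dimensional Lebesgue measure of the acceptance region A = {(s,u) : s ∈ [0,t], u ∈ [0,1], f(s)/r < u}. Then ∑_{k=0}^∞ e^{−rt} (rt)^k / k! · (p/t)^k = exp(−∫₀ᵗ f(s) ds). (This is the acceptance probability identity P(N = 0 | X) = exp{−∫₀ᵗ φ(X_s) ds} underlying the exact algorithm: conditioning on a Poisson(rt) number of points, each independently landing in the acceptance region with probability p/t.) -/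
open Set MeasureTheory

/-- Acceptance probability identity underlying the exact algorithm: with a
Poisson(rt) number of points, each independently landing in the acceptance
region `A = {(s,u) : s ∈ [0,t], u ∈ [0,1], f(s)/r < u}` with probability `p/t`
(where `p` is the Lebesgue measure of `A`), the probability that all points
land in `A` is `exp(-∫₀ᵗ f(s) ds)`. -/
theorem acceptance_probability (t r : ℝ) (ht : 0 < t) (hr : 0 < r)
    (f : ℝ → ℝ) (hf : Measurable f)
    (hf0 : ∀ s ∈ Icc (0 : ℝ) t, 0 ≤ f s) (hfr : ∀ s ∈ Icc (0 : ℝ) t, f s ≤ r)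
    (p : ℝ)
    (hp : p = (volume {q : ℝ × ℝ |
      q.1 ∈ Icc (0 : ℝ) t ∧ q.2 ∈ Icc (0 : ℝ) 1 ∧ f q.1 / r < q.2}).toReal) :
    ∑' k : ℕ, Real.exp (-(r * t)) * (r * t) ^ k / (Nat.factorial k) * (p / t) ^ k =
      Real.exp (-(∫ s in (0 : ℝ)..t, f s)) := by
  set A : Set (ℝ × ℝ) := {q : ℝ × ℝ |
      q.1 ∈ Icc (0 : ℝ) t ∧ q.2 ∈ Icc (0 : ℝ) 1 ∧ f q.1 / r < q.2} with hA
  have hAmeas : MeasurableSet A := by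
    apply MeasurableSet.inter
    · exact (measurableSet_Icc.preimage measurable_fst)
    apply MeasurableSet.inter
    · exact (measurableSet_Icc.preimage measurable_snd)
    · exact measurableSet_lt ((hf.comp measurable_fst).div_const r) measurable_snd
  -- integrability of f on Icc 0 t
  have hint : IntegrableOn f (Icc (0 : ℝ) t) volume := by
    apply Measure.integrableOn_of_bounded (M := r)
    · simp [Real.volume_Icc]
    · exact hf.aestronglyMeasurable
    · filter_upwards [ae_restrict_mem measurableSet_Icc] with x hx
      rw [Real.norm_eq_abs, abs_of_nonneg (hf0 x hx)]
      exact hfr x hx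
  have hintg : IntegrableOn (fun x => 1 - f x / r) (Icc (0 : ℝ) t) volume := by
    exact (integrableOn_const (by simp [Real.volume_Icc]) (by simp)).sub
      (hint.div_const r)
  -- compute the volume of A
  have hsec : ∀ x : ℝ, Prod.mk x ⁻¹' A =
      if x ∈ Icc (0 : ℝ) t then Ioc (f x / r) 1 else ∅ := by
    intro x
    split_ifs with hx
    · ext u
      simp only [hA, mem_preimage, mem_setOf_eq, mem_Ioc, mem_Icc]
      constructor
      · rintro ⟨-, ⟨h0, h1⟩, hlt⟩; exact ⟨hlt, h1⟩
      · rintro ⟨hlt, h1⟩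
        refine ⟨hx, ⟨le_trans (div_nonneg (hf0 x hx) hr.le) hlt.le, h1⟩, hlt⟩
    · ext u; simp only [hA, mem_preimage, mem_setOf_eq, mem_empty_iff_false,
        iff_false]
      exact fun h => hx h.1
  have hvol : volume A = ENNReal.ofReal (∫ x in Icc (0 : ℝ) t, (1 - f x / r)) := by
    rw [show (volume : Measure (ℝ × ℝ)) = volume.prod volume from
      (Measure.volume_eq_prod ℝ ℝ), Measure.prod_apply hAmeas]
    have : ∀ x : ℝ, volume (Prod.mk x ⁻¹' A) =
        (Icc (0 : ℝ) t).indicator (fun x => ENNReal.ofReal (1 - f x / r)) x := by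
      intro x
      rw [hsec x]
      by_cases hx : x ∈ Icc (0 : ℝ) t <;>
        simp [hx, Real.volume_Ioc, indicator_of_mem, indicator_of_notMem]
    rw [lintegral_congr this, lintegral_indicator measurableSet_Icc _,
      ← ofReal_integral_eq_lintegral_ofReal hintg]
    filter_upwards [ae_restrict_mem measurableSet_Icc] with x hx
    have := div_le_one_of_le₀ (hfr x hx) hr.le
    simp only [Pi.zero_apply]
    linarith
  have hInn : 0 ≤ ∫ x in Icc (0 : ℝ) t, (1 - f x / r) := by
    apply setIntegral_nonneg measurableSet_Icc
    intro x hx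
    have := div_le_one_of_le₀ (hfr x hx) hr.le
    linarith
  have hpval : p = t - (∫ s in (0 : ℝ)..t, f s) / r := by
    rw [hp, hvol, ENNReal.toReal_ofReal hInn]
    rw [integral_sub (show IntegrableOn (fun _ => (1:ℝ)) (Icc (0:ℝ) t) volume from
        integrableOn_const (by simp [Real.volume_Icc]) (by simp))
      (hint.div_const r)]
    rw [integral_div, setIntegral_const, measureReal_def, Real.volume_Icc, smul_eq_mul, mul_one,
      sub_zero, ENNReal.toReal_ofReal ht.le,
      intervalIntegral.integral_of_le ht.le, ← integral_Icc_eq_integral_Ioc]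
  -- now the series
  have hterm : ∀ k : ℕ,
      Real.exp (-(r * t)) * (r * t) ^ k / (Nat.factorial k) * (p / t) ^ k =
      Real.exp (-(r * t)) * ((r * p) ^ k / (Nat.factorial k)) := by
    intro k
    have : (r * t) ^ k * (p / t) ^ k = (r * p) ^ k := by
      rw [← mul_pow]
      congr 1
      field_simp
    rw [div_mul_eq_mul_div, mul_assoc, this, mul_div_assoc]
  rw [tsum_congr hterm, tsum_mul_left]
  have hexp : ∑' k : ℕ, (r * p) ^ k / (Nat.factorial k) = Real.exp (r * p) := by
    rw [Real.exp_eq_exp_ℝ, NormedSpace.exp_eq_tsum_div]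
  rw [hexp, ← Real.exp_add]
  congr 1
  rw [hpval]
  field_simp
  ring
end

section
/- Let ρ > 0, σ > 0 and μ ≥ 0. Define a : ℝ → ℝ by a(x) = −(ρ/σ + σ/2)·tanh(σx) + ρμ/(σ·cosh(σx)) and let a′ denote its derivative. Then for all x ∈ ℝ, ½(a(x)² + a′(x)) ≥ −½(ρ + σ²/2 + ρμ/2); i.e., l(θ) = −½(ρ + σ²/2 + ρμ/2) is a lower bound for the function ½(a² + a′) associated with the Lamperti-transformed Pearson diffusion. -/
set_option maxHeartbeats 1000000


/-- For the Lamperti-transformed Pearson diffusion with drift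
`a(x) = -(ρ/σ + σ/2)·tanh(σx) + ρμ/(σ·cosh(σx))`, the quantity
`l(θ) = -½(ρ + σ²/2 + ρμ/2)` is a lower bound for `½(a² + a′)`. -/
theorem pearson_phi_lower_bound (ρ σ μ : ℝ) (hρ : 0 < ρ) (hσ : 0 < σ) (hμ : 0 ≤ μ) :
    ∀ x : ℝ,
      (1 / 2) *
          ((fun u => -(ρ / σ + σ / 2) * Real.tanh (σ * u) +
              ρ * μ / (σ * Real.cosh (σ * u))) x ^ 2 +
            deriv (fun u => -(ρ / σ + σ / 2) * Real.tanh (σ * u) +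
              ρ * μ / (σ * Real.cosh (σ * u))) x) ≥
        -(1 / 2) * (ρ + σ ^ 2 / 2 + ρ * μ / 2) := by
  intro x
  set c := Real.cosh (σ * x) with hc
  set s := Real.sinh (σ * x) with hs
  have hcpos : 0 < c := Real.cosh_pos (x := σ * x)
  have hcne : c ≠ 0 := ne_of_gt hcpos
  have hsq : c ^ 2 = s ^ 2 + 1 := Real.cosh_sq (σ * x)
  -- derivative of the inner linear map
  have hlin : HasDerivAt (fun u : ℝ => σ * u) σ x := by
    simpa using (hasDerivAt_id x).const_mul σ
  have hsinh : HasDerivAt (fun u : ℝ => Real.sinh (σ * u)) (c * σ) x :=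
    (Real.hasDerivAt_sinh (σ * x)).comp x hlin
  have hcosh : HasDerivAt (fun u : ℝ => Real.cosh (σ * u)) (s * σ) x :=
    (Real.hasDerivAt_cosh (σ * x)).comp x hlin
  have htanh : HasDerivAt (fun u : ℝ => Real.tanh (σ * u))
      ((c * σ * c - s * (s * σ)) / c ^ 2) x := by
    have := hsinh.div hcosh hcne
    rw [show (fun u : ℝ => Real.tanh (σ * u)) = (fun u => Real.sinh (σ * u)) / (fun u => Real.cosh (σ * u)) from funext fun u => by simp [Real.tanh_eq_sinh_div_cosh]]
    exact this
  have hden : HasDerivAt (fun u : ℝ => σ * Real.cosh (σ * u)) (σ * (s * σ)) x :=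
    hcosh.const_mul σ
  have hdenne : σ * c ≠ 0 := mul_ne_zero (ne_of_gt hσ) hcne
  have hquot : HasDerivAt (fun u : ℝ => ρ * μ / (σ * Real.cosh (σ * u)))
      ((0 * (σ * c) - ρ * μ * (σ * (s * σ))) / (σ * c) ^ 2) x :=
    (hasDerivAt_const x (ρ * μ)).div hden hdenne
  have hf : HasDerivAt (fun u : ℝ => -(ρ / σ + σ / 2) * Real.tanh (σ * u) +
      ρ * μ / (σ * Real.cosh (σ * u)))
      (-(ρ / σ + σ / 2) * ((c * σ * c - s * (s * σ)) / c ^ 2) +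
        (0 * (σ * c) - ρ * μ * (σ * (s * σ))) / (σ * c) ^ 2) x :=
    (htanh.const_mul (-(ρ / σ + σ / 2))).add hquot
  have hderiv := hf.deriv
  rw [hderiv]
  have hc2 : c * σ * c - s * (s * σ) = σ := by nlinarith
  have key1 : -(ρ / σ + σ / 2) * ((c * σ * c - s * (s * σ)) / c ^ 2)
      = -(ρ + σ ^ 2 / 2) / c ^ 2 := by
    rw [hc2]; field_simp
  have key2 : (0 * (σ * c) - ρ * μ * (σ * (s * σ))) / (σ * c) ^ 2
      = -(ρ * μ * s) / c ^ 2 := by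
    field_simp; ring
  rw [key1, key2]
  set A := -(ρ / σ + σ / 2) * Real.tanh (σ * x) + ρ * μ / (σ * c) with hA
  simp only []
  have hA2 : 0 ≤ A ^ 2 := sq_nonneg A
  have h1 : 0 ≤ (1 - s) ^ 2 := sq_nonneg _
  have hc1 : 1 ≤ c := Real.one_le_cosh (σ * x)
  have hμρ : 0 ≤ ρ * μ := mul_nonneg (le_of_lt hρ) hμ
  have hcsq : (0:ℝ) < c ^ 2 := by positivity
  rw [← hc, ← hA]
  rw [ge_iff_le, ← add_div, ← sub_nonneg]
  have expand : (1:ℝ) / 2 * (A ^ 2 + (-(ρ + σ ^ 2 / 2) + -(ρ * μ * s)) / c ^ 2)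
      - -(1 / 2) * (ρ + σ ^ 2 / 2 + ρ * μ / 2)
      = (A ^ 2 * c ^ 2 + (ρ + σ ^ 2 / 2) * (c ^ 2 - 1) + ρ * μ * ((1 - s) ^ 2 / 2)
          + ρ * μ * (c ^ 2 - (s ^ 2 + 1)) / 2) / (2 * c ^ 2) := by
    field_simp
    ring
  rw [expand]
  apply div_nonneg _ (by positivity)
  have : c ^ 2 - (s ^ 2 + 1) = 0 := by rw [hsq]; ring
  nlinarith [mul_nonneg hμρ h1, mul_nonneg (by nlinarith : (0:ℝ) ≤ ρ + σ^2/2) (by nlinarith : (0:ℝ) ≤ c^2 - 1)]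
end

section
/- Let ρ > 0, σ > 0 and μ ≥ 0. Define a : ℝ → ℝ by a(x) = −(ρ/σ + σ/2)·tanh(σx) + ρμ/(σ·cosh(σx)) and let a′ denote its derivative. Then for all x ∈ ℝ, ½(a(x)² + a′(x)) + ½(ρ + σ²/2 + ρμ/2) ≤ (1/8)·[ρ(6μ + 8) + 3σ² + (4ρ²/σ²)(μ² + μ + 1)]; i.e., the function φ(x; θ) = ½(a(x)² + a′(x)) − l(θ) with l(θ) = −½(ρ + σ²/2 + ρμ/2) is bounded above by r(θ) = (1/8){ρ(6μ+8) + 3σ² + (4ρ²/σ²)(μ²+μ+1)}, so the Pearson diffusion satisfies the boundedness condition of the exact algorithm EA1. -/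
set_option maxHeartbeats 1000000 in
/-- For the Lamperti-transformed Pearson diffusion with drift
`a(x) = -(ρ/σ + σ/2)·tanh(σx) + ρμ/(σ·cosh(σx))`, the function
`φ(x;θ) = ½(a(x)² + a′(x)) - l(θ)` with `l(θ) = -½(ρ + σ²/2 + ρμ/2)` is
bounded above by `r(θ) = (1/8){ρ(6μ+8) + 3σ² + (4ρ²/σ²)(μ²+μ+1)}`, so the
Pearson diffusion satisfies the boundedness condition of EA1. -/
theorem pearson_phi_upper_bound (ρ σ μ : ℝ) (hρ : 0 < ρ) (hσ : 0 < σ) (hμ : 0 ≤ μ) :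
    ∀ x : ℝ,
      (1 / 2) *
          ((fun u => -(ρ / σ + σ / 2) * Real.tanh (σ * u) +
              ρ * μ / (σ * Real.cosh (σ * u))) x ^ 2 +
            deriv (fun u => -(ρ / σ + σ / 2) * Real.tanh (σ * u) +
              ρ * μ / (σ * Real.cosh (σ * u))) x) +
          (1 / 2) * (ρ + σ ^ 2 / 2 + ρ * μ / 2) ≤
        (1 / 8) * (ρ * (6 * μ + 8) + 3 * σ ^ 2 +
          (4 * ρ ^ 2 / σ ^ 2) * (μ ^ 2 + μ + 1)) := by
  intro x
  set c := Real.cosh (σ * x) with hc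
  set s := Real.sinh (σ * x) with hs
  have hcpos : 0 < c := Real.cosh_pos _
  have hc0 : c ≠ 0 := ne_of_gt hcpos
  have hc1 : 1 ≤ c := Real.one_le_cosh _
  have hc2 : c ^ 2 = s ^ 2 + 1 := Real.cosh_sq _
  have h1 : HasDerivAt (fun u : ℝ => σ * u) σ x := by
    simpa using (hasDerivAt_id x).const_mul σ
  have hsinh : HasDerivAt (fun u => Real.sinh (σ * u)) (c * σ) x :=
    (Real.hasDerivAt_sinh _).comp x h1
  have hcosh : HasDerivAt (fun u => Real.cosh (σ * u)) (s * σ) x :=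
    (Real.hasDerivAt_cosh _).comp x h1
  have htanh : HasDerivAt (fun u => Real.tanh (σ * u))
      ((c * σ * c - s * (s * σ)) / c ^ 2) x := by
    have := hsinh.div hcosh hc0
    have heq : (fun u => Real.sinh (σ * u) / Real.cosh (σ * u)) =
        fun u => Real.tanh (σ * u) := funext fun u => (Real.tanh_eq_sinh_div_cosh _).symm
    rw [← heq]; exact this
  have hinv : HasDerivAt (fun u => ρ * μ / (σ * Real.cosh (σ * u)))
      ((0 * (σ * c) - ρ * μ * (σ * (s * σ))) / (σ * c) ^ 2) x :=
    (hasDerivAt_const x (ρ * μ)).div (hcosh.const_mul σ)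
      (by positivity)
  have hf : HasDerivAt (fun u => -(ρ / σ + σ / 2) * Real.tanh (σ * u) +
      ρ * μ / (σ * Real.cosh (σ * u)))
      (-(ρ / σ + σ / 2) * ((c * σ * c - s * (s * σ)) / c ^ 2) +
        (0 * (σ * c) - ρ * μ * (σ * (s * σ))) / (σ * c) ^ 2) x :=
    (htanh.const_mul _).add hinv
  rw [hf.deriv]
  simp only [Real.tanh_eq_sinh_div_cosh, ← hc, ← hs]
  have hσ0 : (σ:ℝ) ≠ 0 := ne_of_gt hσ
  have key : c * σ * c - s * (s * σ) = σ := by nlinarith [hc2]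
  rw [key]
  set A := ρ / σ + σ / 2 with hA
  have hden : (0:ℝ) < s ^ 2 + 1 := by positivity
  have hG : 1 / 2 *
        ((-A * (s / c) + ρ * μ / (σ * c)) ^ 2 +
          (-A * (σ / c ^ 2) +
            (0 * (σ * c) - ρ * μ * (σ * (s * σ))) / (σ * c) ^ 2)) +
      1 / 2 * (ρ + σ ^ 2 / 2 + ρ * μ / 2) =
      (A ^ 2 / 2 * s ^ 2 - (A * ρ * μ / σ + ρ * μ / 2) * s + ρ ^ 2 * μ ^ 2 / (2 * σ ^ 2)
        - σ * A / 2) / c ^ 2 + (σ * A / 2 + ρ * μ / 4) := by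
    rw [hA]
    field_simp
    ring
  rw [hG, hc2]
  have hq : (0:ℝ) < σ ^ 2 := by positivity
  have hfin : A ^ 2 / 2 * s ^ 2 - (A * ρ * μ / σ + ρ * μ / 2) * s + ρ ^ 2 * μ ^ 2 / (2 * σ ^ 2)
        - σ * A / 2 ≤
      (1 / 8 * (ρ * (6 * μ + 8) + 3 * σ ^ 2 + 4 * ρ ^ 2 / σ ^ 2 * (μ ^ 2 + μ + 1))
        - (σ * A / 2 + ρ * μ / 4)) * (s ^ 2 + 1) := by
    rw [hA, ← sub_nonneg]
    have hdiff : (1 / 8 * (ρ * (6 * μ + 8) + 3 * σ ^ 2 + 4 * ρ ^ 2 / σ ^ 2 * (μ ^ 2 + μ + 1)) -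
          (σ * (ρ / σ + σ / 2) / 2 + ρ * μ / 4)) * (s ^ 2 + 1) -
        ((ρ / σ + σ / 2) ^ 2 / 2 * s ^ 2 - ((ρ / σ + σ / 2) * ρ * μ / σ + ρ * μ / 2) * s
          + ρ ^ 2 * μ ^ 2 / (2 * σ ^ 2) - σ * (ρ / σ + σ / 2) / 2) =
        (ρ * μ / 2 + ρ ^ 2 * μ / (2 * σ ^ 2)) * (s + 1) ^ 2 + ρ ^ 2 * μ ^ 2 / (2 * σ ^ 2) * s ^ 2
          + (ρ + 3 * σ ^ 2 / 8 + ρ ^ 2 / (2 * σ ^ 2)) := by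
      field_simp
      ring
    rw [hdiff]
    have t1 : (0:ℝ) ≤ (ρ * μ / 2 + ρ ^ 2 * μ / (2 * σ ^ 2)) * (s + 1) ^ 2 :=
      mul_nonneg (add_nonneg (div_nonneg (mul_nonneg hρ.le hμ) (by norm_num))
        (div_nonneg (mul_nonneg (sq_nonneg ρ) hμ) (by positivity))) (sq_nonneg _)
    have t2 : (0:ℝ) ≤ ρ ^ 2 * μ ^ 2 / (2 * σ ^ 2) * s ^ 2 := by positivity
    have t3 : (0:ℝ) ≤ ρ + 3 * σ ^ 2 / 8 + ρ ^ 2 / (2 * σ ^ 2) := by positivity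
    linarith
  calc (A ^ 2 / 2 * s ^ 2 - (A * ρ * μ / σ + ρ * μ / 2) * s + ρ ^ 2 * μ ^ 2 / (2 * σ ^ 2)
        - σ * A / 2) / (s ^ 2 + 1) + (σ * A / 2 + ρ * μ / 4)
      ≤ (1 / 8 * (ρ * (6 * μ + 8) + 3 * σ ^ 2 + 4 * ρ ^ 2 / σ ^ 2 * (μ ^ 2 + μ + 1))
        - (σ * A / 2 + ρ * μ / 4)) + (σ * A / 2 + ρ * μ / 4) := by
        have := (div_le_iff₀ hden).mpr hfin
        linarith
    _ = _ := by ring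
end

section
/- Let ρ₁, ρ₂, μ₁, μ₂, σ > 0. Define, for x₁, x₂ ∈ ℝ, H₁(x₁,x₂) = ρ₂μ₂σ²(x₂ − μ₂x₁), H₂(x₁,x₂) = −2ρ₁σ²x₂(σ²x₂² − μ₁) − ρ₂σ²(x₂ − μ₂x₁), and ΔH(x₁,x₂) = −ρ₂μ₂²σ² − 2ρ₁σ²(3σ²x₂² − μ₁) − ρ₂σ². Set p₁ = 2μ₂σ²√(2ρ₁)·(9 + μ₂²(9 + 2ρ₁μ₁²))^{3/2} and p₂ = μ₂²σ²·(54ρ₁μ₁(1+μ₂²) − 8ρ₁²μ₁³μ₂² + 27ρ₂(1+μ₂²)²). Then for all x₁, x₂ ∈ ℝ, ½(H₁(x₁,x₂)² + H₂(x₁,x₂)²) + ½ΔH(x₁,x₂) ≥ −(p₁ + p₂)/(54μ₂²(1+μ₂²)), and this lower bound is attained at some point; i.e., l(θ) = −(p₁+p₂)/(54μ₂²(1+μ₂²)) is the global minimum of ψ(x) = ½(‖∇H(x)‖² + ΔH(x)). -/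
set_option maxHeartbeats 1600000 in
/-- For the two-dimensional double well potential diffusion, the function
`ψ(x) = ½(‖∇H(x)‖² + ΔH(x))`, where `H₁, H₂` are the partial derivatives and
`ΔH` the Laplacian of the potential `H(x) = -½G(σx)`, attains the global
minimum `l(θ) = -(p₁ + p₂)/(54 μ₂²(1 + μ₂²))`. -/
theorem mvwell_psi_global_min (ρ₁ ρ₂ μ₁ μ₂ σ : ℝ)
    (hρ₁ : 0 < ρ₁) (hρ₂ : 0 < ρ₂) (hμ₁ : 0 < μ₁) (hμ₂ : 0 < μ₂) (hσ : 0 < σ) :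
    (∀ x₁ x₂ : ℝ,
        (1 / 2) * ((ρ₂ * μ₂ * σ ^ 2 * (x₂ - μ₂ * x₁)) ^ 2 +
              (-2 * ρ₁ * σ ^ 2 * x₂ * (σ ^ 2 * x₂ ^ 2 - μ₁) -
                  ρ₂ * σ ^ 2 * (x₂ - μ₂ * x₁)) ^ 2) +
            (1 / 2) * (-(ρ₂ * μ₂ ^ 2 * σ ^ 2) -
              2 * ρ₁ * σ ^ 2 * (3 * σ ^ 2 * x₂ ^ 2 - μ₁) - ρ₂ * σ ^ 2) ≥
          -((2 * μ₂ * σ ^ 2 * Real.sqrt (2 * ρ₁) *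
                (9 + μ₂ ^ 2 * (9 + 2 * ρ₁ * μ₁ ^ 2)) ^ ((3 : ℝ) / 2) +
              μ₂ ^ 2 * σ ^ 2 * (54 * ρ₁ * μ₁ * (1 + μ₂ ^ 2) -
                8 * ρ₁ ^ 2 * μ₁ ^ 3 * μ₂ ^ 2 + 27 * ρ₂ * (1 + μ₂ ^ 2) ^ 2)) /
            (54 * μ₂ ^ 2 * (1 + μ₂ ^ 2)))) ∧
      ∃ x₁ x₂ : ℝ,
        (1 / 2) * ((ρ₂ * μ₂ * σ ^ 2 * (x₂ - μ₂ * x₁)) ^ 2 +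
              (-2 * ρ₁ * σ ^ 2 * x₂ * (σ ^ 2 * x₂ ^ 2 - μ₁) -
                  ρ₂ * σ ^ 2 * (x₂ - μ₂ * x₁)) ^ 2) +
            (1 / 2) * (-(ρ₂ * μ₂ ^ 2 * σ ^ 2) -
              2 * ρ₁ * σ ^ 2 * (3 * σ ^ 2 * x₂ ^ 2 - μ₁) - ρ₂ * σ ^ 2) =
          -((2 * μ₂ * σ ^ 2 * Real.sqrt (2 * ρ₁) *
                (9 + μ₂ ^ 2 * (9 + 2 * ρ₁ * μ₁ ^ 2)) ^ ((3 : ℝ) / 2) +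
              μ₂ ^ 2 * σ ^ 2 * (54 * ρ₁ * μ₁ * (1 + μ₂ ^ 2) -
                8 * ρ₁ ^ 2 * μ₁ ^ 3 * μ₂ ^ 2 + 27 * ρ₂ * (1 + μ₂ ^ 2) ^ 2)) /
            (54 * μ₂ ^ 2 * (1 + μ₂ ^ 2))) := by
  set s : ℝ := Real.sqrt (μ₁ ^ 2 + 9 * (1 + μ₂ ^ 2) / (2 * ρ₁ * μ₂ ^ 2)) with hs_def
  have hD : (0:ℝ) < μ₁ ^ 2 + 9 * (1 + μ₂ ^ 2) / (2 * ρ₁ * μ₂ ^ 2) := by positivity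
  have hs0 : 0 ≤ s := Real.sqrt_nonneg _
  have hs2 : s ^ 2 = μ₁ ^ 2 + 9 * (1 + μ₂ ^ 2) / (2 * ρ₁ * μ₂ ^ 2) := Real.sq_sqrt hD.le
  have hrel : 2 * ρ₁ * μ₂ ^ 2 * s ^ 2 = 2 * ρ₁ * μ₂ ^ 2 * μ₁ ^ 2 + 9 * (1 + μ₂ ^ 2) := by
    rw [hs2]; field_simp
  have hsμ : μ₁ ≤ s := by
    have h1 : μ₁ ^ 2 ≤ μ₁ ^ 2 + 9 * (1 + μ₂ ^ 2) / (2 * ρ₁ * μ₂ ^ 2) := by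
      have : (0:ℝ) ≤ 9 * (1 + μ₂ ^ 2) / (2 * ρ₁ * μ₂ ^ 2) := by positivity
      linarith
    have h2 : Real.sqrt (μ₁ ^ 2) = μ₁ := by
      rw [Real.sqrt_sq hμ₁.le]
    calc μ₁ = Real.sqrt (μ₁ ^ 2) := h2.symm
    _ ≤ s := Real.sqrt_le_sqrt h1
  have hq : Real.sqrt (2 * ρ₁) ^ 2 = 2 * ρ₁ := Real.sq_sqrt (by positivity)
  have hX : (0:ℝ) ≤ 9 + μ₂ ^ 2 * (9 + 2 * ρ₁ * μ₁ ^ 2) := by positivity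
  have hXeq : 9 + μ₂ ^ 2 * (9 + 2 * ρ₁ * μ₁ ^ 2) = (Real.sqrt (2 * ρ₁) * μ₂ * s) ^ 2 := by
    linear_combination (-(μ₂ ^ 2 * s ^ 2)) * hq - hrel
  have hsqrtX : Real.sqrt (9 + μ₂ ^ 2 * (9 + 2 * ρ₁ * μ₁ ^ 2)) = Real.sqrt (2 * ρ₁) * μ₂ * s := by
    rw [hXeq]; exact Real.sqrt_sq (by positivity)
  have hp1 : 2 * μ₂ * σ ^ 2 * Real.sqrt (2 * ρ₁) *
      (9 + μ₂ ^ 2 * (9 + 2 * ρ₁ * μ₁ ^ 2)) ^ ((3 : ℝ) / 2)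
      = 8 * ρ₁ ^ 2 * μ₂ ^ 4 * σ ^ 2 * s ^ 3 := by
    have h32 : (9 + μ₂ ^ 2 * (9 + 2 * ρ₁ * μ₁ ^ 2)) ^ ((3 : ℝ) / 2)
        = (Real.sqrt (2 * ρ₁) * μ₂ * s) ^ (3:ℕ) := by
      rw [show ((3:ℝ)/2) = (1/2 : ℝ) * ((3:ℕ) : ℝ) by push_cast; ring,
        Real.rpow_mul hX, Real.rpow_natCast, ← Real.sqrt_eq_rpow, hsqrtX]
    rw [h32]
    linear_combination (2 * μ₂ ^ 4 * σ ^ 2 * s ^ 3 * (Real.sqrt (2 * ρ₁) ^ 2 + 2 * ρ₁)) * hq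
  have hId : ∀ x₁ x₂ : ℝ,
      54 * μ₂ ^ 2 * (1 + μ₂ ^ 2) *
        ((1 / 2) * ((ρ₂ * μ₂ * σ ^ 2 * (x₂ - μ₂ * x₁)) ^ 2 +
              (-2 * ρ₁ * σ ^ 2 * x₂ * (σ ^ 2 * x₂ ^ 2 - μ₁) -
                  ρ₂ * σ ^ 2 * (x₂ - μ₂ * x₁)) ^ 2) +
            (1 / 2) * (-(ρ₂ * μ₂ ^ 2 * σ ^ 2) -
              2 * ρ₁ * σ ^ 2 * (3 * σ ^ 2 * x₂ ^ 2 - μ₁) - ρ₂ * σ ^ 2)) +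
        (8 * ρ₁ ^ 2 * μ₂ ^ 4 * σ ^ 2 * s ^ 3 +
          μ₂ ^ 2 * σ ^ 2 * (54 * ρ₁ * μ₁ * (1 + μ₂ ^ 2) -
            8 * ρ₁ ^ 2 * μ₁ ^ 3 * μ₂ ^ 2 + 27 * ρ₂ * (1 + μ₂ ^ 2) ^ 2)) =
      27 * (ρ₂ * μ₂ * σ ^ 2 * (x₂ - μ₂ * x₁) * (1 + μ₂ ^ 2) -
          (-2 * ρ₁ * σ ^ 2 * x₂ * (σ ^ 2 * x₂ ^ 2 - μ₁)) * μ₂) ^ 2 +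
        54 * μ₂ ^ 2 * (2 * ρ₁ ^ 2 * σ ^ 2 * μ₂ ^ 2) *
          (σ ^ 2 * x₂ ^ 2 - (2 * μ₁ + s) / 3) ^ 2 *
          (σ ^ 2 * x₂ ^ 2 + 2 * ((2 * μ₁ + s) / 3) - 2 * μ₁) := by
    intro x₁ x₂
    linear_combination (18 * ρ₁ * μ₂ ^ 2 * σ ^ 4 * x₂ ^ 2 - 12 * ρ₁ * μ₁ * μ₂ ^ 2 * σ ^ 2) * hrel
  have hd : (0:ℝ) < 54 * μ₂ ^ 2 * (1 + μ₂ ^ 2) := by positivity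
  constructor
  · intro x₁ x₂
    have h := hId x₁ x₂
    have hlast : 0 ≤ σ ^ 2 * x₂ ^ 2 + 2 * ((2 * μ₁ + s) / 3) - 2 * μ₁ := by
      nlinarith [sq_nonneg (σ * x₂), hsμ]
    have h2 : 0 ≤ 54 * μ₂ ^ 2 * (2 * ρ₁ ^ 2 * σ ^ 2 * μ₂ ^ 2) *
        (σ ^ 2 * x₂ ^ 2 - (2 * μ₁ + s) / 3) ^ 2 *
        (σ ^ 2 * x₂ ^ 2 + 2 * ((2 * μ₁ + s) / 3) - 2 * μ₁) :=
      mul_nonneg (by positivity) hlast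
    have h1 : 0 ≤ 27 * (ρ₂ * μ₂ * σ ^ 2 * (x₂ - μ₂ * x₁) * (1 + μ₂ ^ 2) -
        (-2 * ρ₁ * σ ^ 2 * x₂ * (σ ^ 2 * x₂ ^ 2 - μ₁)) * μ₂) ^ 2 := by positivity
    rw [hp1, ge_iff_le, neg_le, le_div_iff₀ hd]
    linarith [h, h1, h2]
  · set x₂ : ℝ := Real.sqrt ((2 * μ₁ + s) / 3) / σ with hx₂_def
    refine ⟨(x₂ * (ρ₂ * σ ^ 2 * (1 + μ₂ ^ 2)) -
        (-2 * ρ₁ * σ ^ 2 * x₂ * (σ ^ 2 * x₂ ^ 2 - μ₁))) / (μ₂ * (ρ₂ * σ ^ 2 * (1 + μ₂ ^ 2))),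
      x₂, ?_⟩
    set x₁ : ℝ := (x₂ * (ρ₂ * σ ^ 2 * (1 + μ₂ ^ 2)) -
        (-2 * ρ₁ * σ ^ 2 * x₂ * (σ ^ 2 * x₂ ^ 2 - μ₁))) / (μ₂ * (ρ₂ * σ ^ 2 * (1 + μ₂ ^ 2)))
      with hx₁_def
    have hust : (0:ℝ) ≤ (2 * μ₁ + s) / 3 := by positivity
    have hx2sq : σ ^ 2 * x₂ ^ 2 = (2 * μ₁ + s) / 3 := by
      rw [hx₂_def, div_pow, Real.sq_sqrt hust]
      field_simp
    have hz2 : σ ^ 2 * x₂ ^ 2 - (2 * μ₁ + s) / 3 = 0 := by rw [hx2sq]; ring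
    have hz1 : ρ₂ * μ₂ * σ ^ 2 * (x₂ - μ₂ * x₁) * (1 + μ₂ ^ 2) -
        (-2 * ρ₁ * σ ^ 2 * x₂ * (σ ^ 2 * x₂ ^ 2 - μ₁)) * μ₂ = 0 := by
      rw [hx₁_def]
      field_simp
      ring
    have h := hId x₁ x₂
    rw [hz1, hz2] at h
    norm_num at h
    rw [hp1, eq_comm, neg_eq_iff_eq_neg, div_eq_iff hd.ne']
    linarith [h]
end
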